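/- Let C, d, m, p ≥ 1, let A ∈ ℝ^{d×d}, A_ψ ∈ ℝ^{d×m}, B ∈ ℝ^{d×p} be matrices shared across all variables, and let ψ : (ℝ^d)^C → ℝ^m be permutation-invariant (ψ(v ∘ σ) = ψ(v) for all permutations σ) and globally Lipschitz. Let x : ℝ × {1,…,C} → ℝ^p be continuous in t, fix T > 0 and a permutation π of {1,…,C}. Suppose h₁, h₂ : [0,T] × {1,…,C} → ℝ^d both satisfy the dynamics ∂h(t,c)/∂t = A h(t,c) + A_ψ ψ(h(t,·)) + B u(t,c) on [0,T], where h₁ uses input u = x with initial states h₁(0,c), and h₂ uses the permuted input u(t,c) = x(t,π(c)) with permuted initial states h₂(0,c) = h₁(0,π(c)). Then h₂(t,c) = h₁(t,π(c)) for all t ∈ [0,T] and all c; i.e., the dynamics are permutation-equivariant with respect to the variable axis. -/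

import Mathlib

theorem stmt17 (C d m p : ℕ) (hC : 1 ≤ C) (hd : 1 ≤ d) (hm : 1 ≤ m) (hp : 1 ≤ p)
    (A : Matrix (Fin d) (Fin d) ℝ) (Aψ : Matrix (Fin d) (Fin m) ℝ)
    (B : Matrix (Fin d) (Fin p) ℝ)
    (ψ : (Fin C → (Fin d → ℝ)) → (Fin m → ℝ))
    (hψ : ∀ (σ : Equiv.Perm (Fin C)) (v : Fin C → (Fin d → ℝ)),
      ψ (fun c => v (σ c)) = ψ v)
    (hLip : ∃ L : ℝ, 0 ≤ L ∧ ∀ v w : Fin C → (Fin d → ℝ),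
      ‖ψ v - ψ w‖ ≤ L * ‖v - w‖)
    (x : ℝ → Fin C → (Fin p → ℝ)) (hx : ∀ c : Fin C, Continuous (fun t => x t c))
    (T : ℝ) (hT : 0 < T) (π : Equiv.Perm (Fin C))
    (h₁ h₂ : ℝ → Fin C → (Fin d → ℝ))
    (hode₁ : ∀ (c : Fin C), ∀ t ∈ Set.Icc (0 : ℝ) T,
      HasDerivWithinAt (fun s => h₁ s c)
        (A.mulVec (h₁ t c) + Aψ.mulVec (ψ (h₁ t)) + B.mulVec (x t c))
        (Set.Icc (0 : ℝ) T) t)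
    (hode₂ : ∀ (c : Fin C), ∀ t ∈ Set.Icc (0 : ℝ) T,
      HasDerivWithinAt (fun s => h₂ s c)
        (A.mulVec (h₂ t c) + Aψ.mulVec (ψ (h₂ t)) + B.mulVec (x t (π c)))
        (Set.Icc (0 : ℝ) T) t)
    (hinit : ∀ c : Fin C, h₂ 0 c = h₁ 0 (π c)) :
    ∀ t ∈ Set.Icc (0 : ℝ) T, ∀ c : Fin C, h₂ t c = h₁ t (π c) := by
  obtain ⟨L, hL0, hLψ⟩ := hLip
  set CA : (Fin d → ℝ) →L[ℝ] (Fin d → ℝ) :=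
    LinearMap.toContinuousLinearMap A.mulVecLin with hCA
  set CAψ : (Fin m → ℝ) →L[ℝ] (Fin d → ℝ) :=
    LinearMap.toContinuousLinearMap Aψ.mulVecLin with hCAψ
  have hCAap : ∀ u, CA u = A.mulVec u := fun u => rfl
  have hCAψap : ∀ u, CAψ u = Aψ.mulVec u := fun u => rfl
  set K : ℝ := ‖CA‖ + ‖CAψ‖ * L with hK
  have hK0 : 0 ≤ K := by positivity
  set V : ℝ → (Fin C → Fin d → ℝ) → (Fin C → Fin d → ℝ) :=
    fun t u c => A.mulVec (u c) + Aψ.mulVec (ψ u) + B.mulVec (x t (π c)) with hV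
  have hlip : ∀ t, LipschitzWith K.toNNReal (V t) := by
    intro t
    apply LipschitzWith.of_dist_le_mul
    intro u w
    rw [dist_eq_norm, dist_eq_norm]
    rw [Real.coe_toNNReal _ hK0]
    have hnn : 0 ≤ K * ‖u - w‖ := by positivity
    rw [pi_norm_le_iff_of_nonneg hnn]
    intro c
    have : (V t u - V t w) c
        = CA (u c - w c) + CAψ (ψ u - ψ w) := by
      simp only [hV, Pi.sub_apply, map_sub, hCAap, hCAψap, Matrix.mulVec_sub]
      abel
    rw [this]
    calc ‖CA (u c - w c) + CAψ (ψ u - ψ w)‖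
        ≤ ‖CA (u c - w c)‖ + ‖CAψ (ψ u - ψ w)‖ := norm_add_le _ _
      _ ≤ ‖CA‖ * ‖u c - w c‖ + ‖CAψ‖ * ‖ψ u - ψ w‖ := by
          gcongr <;> exact ContinuousLinearMap.le_opNorm _ _
      _ ≤ ‖CA‖ * ‖u - w‖ + ‖CAψ‖ * (L * ‖u - w‖) := by
          gcongr
          · exact norm_le_pi_norm (u - w) c
          · exact hLψ u w
      _ = K * ‖u - w‖ := by ring
  set f : ℝ → (Fin C → Fin d → ℝ) := fun t => h₂ t with hf
  set g : ℝ → (Fin C → Fin d → ℝ) := fun t c => h₁ t (π c) with hg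
  have hgψ : ∀ t, ψ (g t) = ψ (h₁ t) := fun t => hψ π (h₁ t)
  have hfc : ContinuousOn f (Set.Icc 0 T) := by
    apply continuousOn_pi.2
    intro c t ht
    exact (hode₂ c t ht).continuousWithinAt
  have hgc : ContinuousOn g (Set.Icc 0 T) := by
    apply continuousOn_pi.2
    intro c t ht
    exact (hode₁ (π c) t ht).continuousWithinAt
  have hfd : ∀ t ∈ Set.Ico (0 : ℝ) T, HasDerivWithinAt f (V t (f t)) (Set.Ici t) t := by
    intro t ht
    apply hasDerivWithinAt_pi.2
    intro c
    exact (hode₂ c t ⟨ht.1, ht.2.le⟩).mono_of_mem_nhdsWithin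
      (Icc_mem_nhdsGE_of_mem ⟨ht.1, ht.2⟩)
  have hgd : ∀ t ∈ Set.Ico (0 : ℝ) T, HasDerivWithinAt g (V t (g t)) (Set.Ici t) t := by
    intro t ht
    apply hasDerivWithinAt_pi.2
    intro c
    have := (hode₁ (π c) t ⟨ht.1, ht.2.le⟩).mono_of_mem_nhdsWithin
      (Icc_mem_nhdsGE_of_mem ⟨ht.1, ht.2⟩)
    have he : V t (g t) c
        = A.mulVec (h₁ t (π c)) + Aψ.mulVec (ψ (h₁ t)) + B.mulVec (x t (π c)) := by
      simp only [hV, hgψ t]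
      rfl
    rw [he]
    exact this
  have h0 : f 0 = g 0 := funext hinit
  have := ODE_solution_unique hlip hfc hfd hgc hgd h0
  intro t ht c
  have := this ht
  exact congrFun this c
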